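/- Let S be a vertex subset of a graph G constructed by the stack-based procedure of Algorithm 1: initialize S = {v}; whenever a vertex u popped from the stack has no neighbor in S other than its recorded parent (which is in S), add u to S. Then at every point of the execution, the subgraph induced by S is a tree; in particular the final S induces a tree. -/

import Mathlib

/-- A vertex set built by the stack-based procedure of Algorithm 1: starting from `{v}`,
a vertex `u` is added when its recorded parent `p` is in `S`, is adjacent to `u`, and no
other neighbor of `u` lies in `S`. -/
inductive StackSet {V : Type*} (G : SimpleGraph V) : Set V → Prop
  | base (v : V) : StackSet G {v}
  | step (S : Set V) (u p : V) (hp : p ∈ S) (hadj : G.Adj u p) (hu : u ∉ S)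
      (honly : ∀ q ∈ S, G.Adj u q → q = p) :
      StackSet G S → StackSet G (insert u S)

section Helpers

open SimpleGraph

variable {V : Type*} {G : SimpleGraph V}

/-- In a nontrivial walk to `b`, some vertex is adjacent to `b` via an edge of the walk. -/
lemma exists_last_edge {H : SimpleGraph V} :
    ∀ {a b : V} (w : H.Walk a b), a ≠ b → ∃ y, H.Adj y b ∧ s(y, b) ∈ w.edges := by
  intro a b w
  induction w with
  | nil => intro h; exact absurd rfl h
  | @cons a x b h w ih =>
    intro _
    by_cases hxb : x = b
    · subst hxb
      exact ⟨a, h, by simp⟩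
    · obtain ⟨y, hy, hye⟩ := ih hxb
      exact ⟨y, hy, by simp [hye]⟩

/-- A walk in `G.induce t` whose support lies in `s ⊆ t` comes from a walk in `G.induce s`. -/
lemma exists_preimage_walk {s t : Set V} (hst : s ⊆ t) :
    ∀ {a b : ↥t} (w : (G.induce t).Walk a b) (ha : (a : V) ∈ s) (hb : (b : V) ∈ s),
      (∀ x ∈ w.support, (x : V) ∈ s) →
      ∃ w' : (G.induce s).Walk ⟨a, ha⟩ ⟨b, hb⟩,
        w'.map (G.induceHomOfLE hst).toHom = w := by
  intro a b w
  induction w with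
  | nil =>
    intro ha hb _
    exact ⟨SimpleGraph.Walk.nil, rfl⟩
  | @cons a x b h w ih =>
    intro ha hb hsup
    have hx : (x : V) ∈ s := hsup x (by simp)
    obtain ⟨w', hw'⟩ := ih hx hb (fun y hy => hsup y (by simp [hy]))
    refine ⟨SimpleGraph.Walk.cons (by exact h : (G.induce s).Adj ⟨a, ha⟩ ⟨x, hx⟩) w', ?_⟩
    subst hw'; rfl

lemma induce_singleton_connected (G : SimpleGraph V) (u : V) :
    (G.induce {u}).Connected := by
  rw [SimpleGraph.connected_iff_exists_forall_reachable]
  refine ⟨⟨u, rfl⟩, fun b => ?_⟩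
  have : (⟨u, rfl⟩ : ↥({u} : Set V)) = b := Subtype.ext b.2.symm
  exact this ▸ SimpleGraph.Reachable.refl _

lemma induce_singleton_isTree (G : SimpleGraph V) (u : V) :
    (G.induce {u}).IsTree := by
  refine ⟨induce_singleton_connected G u, ?_⟩
  intro w c hc
  cases c with
  | nil => exact hc.not_of_nil
  | cons h q =>
    have hall : ∀ z z' : ↥({u} : Set V), z = z' := fun z z' => Subtype.ext (z.2.trans z'.2.symm)
    exact h.ne (hall _ _)

end Helpers

/-- At every point of the execution of the stack-based procedure, the subgraph induced by the
current set is a tree; in particular the final set induces a tree. -/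
theorem stackSet_induce_isTree {V : Type*} (G : SimpleGraph V) (S : Set V)
    (hS : StackSet G S) : (G.induce S).IsTree := by
  induction hS with
  | base v => exact induce_singleton_isTree G v
  | @step S u p hp hadj hu honly _ ih =>
    constructor
    · -- connected
      have h1 : (G.induce (S ∪ {u})).Connected :=
        G.connected_induce_union ih.isConnected.preconnected
          (induce_singleton_connected G u).preconnected hp rfl hadj.symm
      rwa [Set.union_singleton] at h1
    · -- acyclic
      classical
      intro a c hc
      have huT : u ∈ insert u S := Set.mem_insert u S
      by_cases hmem : (⟨u, huT⟩ : ↥(insert u S)) ∈ c.support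
      · -- rotate the cycle to start at u
        have hc' : (c.rotate _ hmem).IsCycle := hc.rotate hmem
        generalize c.rotate _ hmem = c' at hc'
        cases c' with
        | nil => exact hc'.not_of_nil
        | @cons _ x _ h q =>
          rw [SimpleGraph.Walk.cons_isCycle_iff] at hc'
          obtain ⟨hqpath, hedge⟩ := hc'
          have hxu : x ≠ ⟨u, huT⟩ := h.ne'
          obtain ⟨y, hyadj, hyedge⟩ := exists_last_edge q hxu
          have hyu : y ≠ ⟨u, huT⟩ := hyadj.ne
          -- x and y have values in S
          have hxS : (x : V) ∈ S := by
            rcases x.2 with hx | hx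
            · exact absurd (Subtype.ext hx) hxu
            · exact hx
          have hyS : (y : V) ∈ S := by
            rcases y.2 with hy | hy
            · exact absurd (Subtype.ext hy) hyu
            · exact hy
          have hxp : (x : V) = p := honly _ hxS h
          have hyp : (y : V) = p := honly _ hyS hyadj.symm
          have hxy : x = y := Subtype.ext (hxp.trans hyp.symm)
          rw [← hxy, Sym2.eq_swap] at hyedge
          exact hedge hyedge
      · -- cycle avoids u': pull it back to G.induce S
        have haS : (a : V) ∈ S := by
          rcases a.2 with ha | ha
          · exact absurd (Subtype.ext ha : a = ⟨u, huT⟩) (fun h => hmem (h ▸ c.start_mem_support))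
          · exact ha
        have hsup : ∀ x ∈ c.support, (x : V) ∈ S := by
          intro x hx
          rcases x.2 with hxu' | hxS
          · exact absurd hx ((Subtype.ext hxu' : x = ⟨u, huT⟩) ▸ hmem)
          · exact hxS
        obtain ⟨w', hw'⟩ :=
          exists_preimage_walk (Set.subset_insert u S) c haS haS hsup
        have hinj : Function.Injective (G.induceHomOfLE (Set.subset_insert u S)).toHom :=
          (G.induceHomOfLE (Set.subset_insert u S)).injective
        have : w'.IsCycle := by
          rw [← SimpleGraph.Walk.map_isCycle_iff_of_injective hinj, hw']
          exact hc
        exact ih.IsAcyclic _ this
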